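/- Let n be even, let J = [[0, −Id],[Id, 0]] ∈ gl(n,ℝ), let ℒ be a real symplectic decomposition of ℂ^n, let (m_L)_{L∈ℒ} ⊂ (1/2)ℤ^d, and let Ψ(θ) = Σ_{L∈ℒ} e^{2πi⟨m_L,θ⟩}P_L. Then Ψ(θ) ∈ Sp(n,ℝ) for every θ ∈ ℝ^d if and only if: (i) m_L = −m_{L̄} for every L ∈ ℒ, and (ii) whenever L, L' ∈ ℒ satisfy ⟨L, JL'⟩ ≠ 0, one has m_L = m_{L'}. -/

import Mathlib

open scoped BigOperators
open MeasureTheory Matrix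

noncomputable section

attribute [local instance] Matrix.linftyOpNormedAddCommGroup Matrix.linftyOpNormedSpace

/-- Iterated partial derivative with multi-index `α`. -/
def mpd {d : ℕ} {E : Type*} [NormedAddCommGroup E] [NormedSpace ℝ E]
    (α : Fin d → ℕ) (f : (Fin d → ℝ) → E) : (Fin d → ℝ) → E :=
  (List.finRange d).foldr
    (fun i g =>
      (fun (h : (Fin d → ℝ) → E) (θ : Fin d → ℝ) => fderiv ℝ h θ (Pi.single i 1))^[α i] g) f

/-- The quantity whose supremum over `p = (α, θ)` is the Gevrey-2 norm `‖f‖_r`. -/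
def gevreyQ {d : ℕ} {E : Type*} [NormedAddCommGroup E] [NormedSpace ℝ E]
    (r : ℝ) (f : (Fin d → ℝ) → E) (p : (Fin d → ℕ) × (Fin d → ℝ)) : ℝ :=
  r ^ (2 * ∑ i, p.1 i) / ((∏ i, Nat.factorial (p.1 i) : ℕ) : ℝ) ^ 2 * ‖mpd p.1 f p.2‖

/-- `‖f‖_r ≤ M`. -/
def GevreyLe {d : ℕ} {E : Type*} [NormedAddCommGroup E] [NormedSpace ℝ E]
    (r : ℝ) (f : (Fin d → ℝ) → E) (M : ℝ) : Prop :=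
  ∀ p, gevreyQ r f p ≤ M

/-- The Gevrey-2 norm of `f` is finite. -/
def GevreyFinite {d : ℕ} {E : Type*} [NormedAddCommGroup E] [NormedSpace ℝ E]
    (r : ℝ) (f : (Fin d → ℝ) → E) : Prop :=
  BddAbove (Set.range (gevreyQ r f))

/-- The Gevrey-2 norm `‖f‖_r`. -/
def gevreyNorm {d : ℕ} {E : Type*} [NormedAddCommGroup E] [NormedSpace ℝ E]
    (r : ℝ) (f : (Fin d → ℝ) → E) : ℝ :=
  ⨆ p, gevreyQ r f p

/-- `ℤ^d`-periodicity (function on the torus `𝕋^d`). -/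
def Per1 {d : ℕ} {E : Type*} (f : (Fin d → ℝ) → E) : Prop :=
  ∀ (θ : Fin d → ℝ) (k : Fin d → ℤ), f (θ + fun i => (k i : ℝ)) = f θ

/-- `2ℤ^d`-periodicity (function on the double torus `2𝕋^d`). -/
def Per2 {d : ℕ} {E : Type*} (f : (Fin d → ℝ) → E) : Prop :=
  ∀ (θ : Fin d → ℝ) (k : Fin d → ℤ), f (θ + fun i => 2 * (k i : ℝ)) = f θ

/-- The character `e^{2πi⟨m/2,θ⟩}` attached to the half-integer vector `m/2`, `m ∈ ℤ^d`. -/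
def eHalf {d : ℕ} (m : Fin d → ℤ) (θ : Fin d → ℝ) : ℂ :=
  Complex.exp ((2 * Real.pi * Complex.I) * ∑ i, ((m i : ℂ) / 2) * (θ i : ℂ))

/-- `|m/2| = |m₁|/2 + ⋯ + |m_d|/2` for a half-integer vector `m/2`. -/
def hnorm {d : ℕ} (m : Fin d → ℤ) : ℝ := (∑ i, |(m i : ℝ)|) / 2

/-- Fourier coefficient `f̂(m/2) = 2^{-d}∫_{[0,2]^d} f(θ)e^{-2πi⟨m/2,θ⟩}dθ`. -/
def fourierC {d n : ℕ} (f : (Fin d → ℝ) → Matrix (Fin n) (Fin n) ℂ) (m : Fin d → ℤ) :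
    Matrix (Fin n) (Fin n) ℂ :=
  ((2 : ℝ) ^ d)⁻¹ • ∫ θ in Set.Icc (0 : Fin d → ℝ) (fun _ => 2), eHalf (-m) θ • f θ

/-- Truncation of `f` at order `N`: `f^N = Σ_{|m|≤N} f̂(m)e^{2πi⟨m,·⟩}`. -/
def truncN {d n : ℕ} (N : ℕ) (f : (Fin d → ℝ) → Matrix (Fin n) (Fin n) ℂ) :
    (Fin d → ℝ) → Matrix (Fin n) (Fin n) ℂ :=
  fun θ => ∑ m ∈ (Finset.Icc (fun _ => -(2 * (N : ℤ))) (fun _ => (2 * (N : ℤ)))).filter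
      (fun m : Fin d → ℤ => hnorm m ≤ N),
    eHalf m θ • fourierC f m

/-- `ω` is Diophantine with constant `κ` and exponent `τ`. -/
def IsDioph {d : ℕ} (ω : Fin d → ℝ) (κ τ : ℝ) : Prop :=
  ∀ m : Fin d → ℤ, m ≠ 0 → κ / (∑ i, |(m i : ℝ)|) ^ τ ≤ |∑ i, (m i : ℝ) * ω i|

/-- `A` has `DC^N_ω(κ',τ)` spectrum. -/
def DCspec {d n : ℕ} (ω : Fin d → ℝ) (N : ℕ) (κ' τ : ℝ)
    (A : Matrix (Fin n) (Fin n) ℂ) : Prop :=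
  ∀ α ∈ spectrum ℂ A, ∀ β ∈ spectrum ℂ A, ∀ m : Fin d → ℤ, m ≠ 0 → hnorm m ≤ N →
    κ' / hnorm m ^ τ ≤
      ‖α - β - (2 * Real.pi * Complex.I) * ∑ i, ((m i : ℂ) / 2) * (ω i : ℂ)‖

/-- The trivial map `Φ(θ) = Σ_L e^{2πi⟨m_L,θ⟩}P_L` attached to a decomposition. -/
def PhiTriv {d n s : ℕ} (P : Fin s → Matrix (Fin n) (Fin n) ℂ)
    (m : Fin s → Fin d → ℤ) (θ : Fin d → ℝ) : Matrix (Fin n) (Fin n) ℂ :=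
  ∑ L, eHalf (m L) θ • P L

/-- `F` has good periodicity properties w.r.t. the decomposition `P` and the family `m`:
`Φ⁻¹FΦ` is `ℤ^d`-periodic. -/
def GoodPer {d n s : ℕ} (F : (Fin d → ℝ) → Matrix (Fin n) (Fin n) ℂ)
    (P : Fin s → Matrix (Fin n) (Fin n) ℂ) (m : Fin s → Fin d → ℤ) : Prop :=
  Per1 (fun θ => PhiTriv P (fun L => -(m L)) θ * F θ * PhiTriv P m θ)

/-- Directional derivative `∂_ω f`. -/
def dOm {d : ℕ} {E : Type*} [NormedAddCommGroup E] [NormedSpace ℝ E]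
    (ω : Fin d → ℝ) (f : (Fin d → ℝ) → E) (θ : Fin d → ℝ) : E :=
  fderiv ℝ f θ ω

/-- The standard symplectic matrix `J = [[0,-Id],[Id,0]]` on `ℂ^{k+k}`. -/
def Jmat (k : ℕ) : Matrix (Fin (k + k)) (Fin (k + k)) ℂ :=
  Matrix.reindex finSumFinEquiv finSumFinEquiv (Matrix.fromBlocks 0 (-1) 1 0)

/-- The Hermitian inner product on `ℂ^n`, antilinear in the second variable. -/
def herm {n : ℕ} (u v : Fin n → ℂ) : ℂ := ∑ i, u i * (starRingEnd ℂ) (v i)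

/-- `⟨L,JL'⟩ ≠ 0` for the subspaces `L = ran P_L`, `L' = ran P_{L'}`. -/
def pairNZ {n s : ℕ} (J : Matrix (Fin n) (Fin n) ℂ)
    (P : Fin s → Matrix (Fin n) (Fin n) ℂ) (L L' : Fin s) : Prop :=
  ∃ u v : Fin n → ℂ, herm (P L *ᵥ u) (J *ᵥ (P L' *ᵥ v)) ≠ 0

/-- for a real symplectic decomposition of `ℂ^{2k}` the trivial map
`Ψ(θ) = Σ_L e^{2πi⟨m_L,θ⟩}P_L` takes values in `Sp(2k,ℝ)` iff `m_{L̄} = −m_L` for all `L` and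
`m_L = m_{L'}` whenever `⟨L,JL'⟩ ≠ 0`. -/
lemma eHalf_zero' {d : ℕ} (θ : Fin d → ℝ) : eHalf 0 θ = 1 := by
  simp [eHalf]

lemma eHalf_add' {d : ℕ} (a b : Fin d → ℤ) (θ : Fin d → ℝ) :
    eHalf (a + b) θ = eHalf a θ * eHalf b θ := by
  have hs : (∑ i, (((a + b) i : ℂ) / 2) * (θ i : ℂ))
      = (∑ i, ((a i : ℂ) / 2) * (θ i : ℂ)) + (∑ i, ((b i : ℂ) / 2) * (θ i : ℂ)) := by
    rw [← Finset.sum_add_distrib]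
    refine Finset.sum_congr rfl fun i _ => ?_
    simp only [Pi.add_apply]
    push_cast
    ring
  rw [eHalf, eHalf, eHalf, ← Complex.exp_add, hs, mul_add]

lemma star_eHalf {d : ℕ} (a : Fin d → ℤ) (θ : Fin d → ℝ) :
    (starRingEnd ℂ) (eHalf a θ) = eHalf (-a) θ := by
  rw [eHalf, eHalf, ← Complex.exp_conj]
  congr 1
  simp only [_root_.map_mul, map_sum, map_div₀, Complex.conj_I, map_ofNat, Complex.conj_ofReal,
    map_intCast]
  rw [Finset.mul_sum, Finset.mul_sum]
  refine Finset.sum_congr rfl fun i _ => ?_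
  simp only [Pi.neg_apply]
  push_cast
  ring

lemma eHalf_forall_one {d : ℕ} {a : Fin d → ℤ} (h : ∀ θ, eHalf a θ = 1) : a = 0 := by
  funext i
  by_contra hi
  have hi' : (a i : ℂ) ≠ 0 := by exact_mod_cast hi
  have h1 := h (Pi.single i (1 / (2 * (a i : ℝ))))
  rw [eHalf] at h1
  have hs : (∑ j, ((a j : ℂ) / 2) * ((Pi.single i (1 / (2 * (a i : ℝ))) : Fin d → ℝ) j : ℂ))
      = 1 / 4 := by
    rw [Finset.sum_eq_single i]
    · simp only [Pi.single_eq_same]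
      push_cast
      field_simp
      ring
    · intro j _ hj
      simp [Pi.single_eq_of_ne hj]
    · simp
  rw [hs] at h1
  have h2 : Complex.exp ((2 * Real.pi * Complex.I) * (1/4) + (2 * Real.pi * Complex.I) * (1/4))
      = 1 := by rw [Complex.exp_add, h1]; simp
  have h3 : (2 * (Real.pi:ℂ) * Complex.I) * (1/4) + (2 * (Real.pi:ℂ) * Complex.I) * (1/4)
      = (Real.pi:ℂ) * Complex.I := by ring
  rw [h3, Complex.exp_pi_mul_I] at h2
  norm_num at h2

lemma Jmat_conj (k : ℕ) : (Jmat k).map (starRingEnd ℂ) = Jmat k := by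
  ext i j
  simp only [Jmat, Matrix.map_apply, Matrix.reindex_apply, Matrix.submatrix_apply]
  rcases (finSumFinEquiv.symm i) with a | a <;> rcases (finSumFinEquiv.symm j) with b | b <;>
    simp [Matrix.fromBlocks, Matrix.one_apply, apply_ite]





variable {d n s : ℕ} {P : Fin s → Matrix (Fin n) (Fin n) ℂ}
  {m : Fin s → Fin d → ℤ} {σ : Fin s → Fin s}

lemma Phi_mul_P (hidem : ∀ L, P L * P L = P L)
    (horth : ∀ L L', L ≠ L' → P L * P L' = 0) (θ : Fin d → ℝ) (M : Fin s) :
    PhiTriv P m θ * P M = eHalf (m M) θ • P M := by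
  rw [PhiTriv, Finset.sum_mul]
  rw [Finset.sum_eq_single M]
  · rw [smul_mul_assoc, hidem]
  · intro L _ hL
    rw [smul_mul_assoc, horth L M hL, smul_zero]
  · simp

lemma P_mul_Phi (hidem : ∀ L, P L * P L = P L)
    (horth : ∀ L L', L ≠ L' → P L * P L' = 0) (θ : Fin d → ℝ) (M : Fin s) :
    P M * PhiTriv P m θ = eHalf (m M) θ • P M := by
  rw [PhiTriv, Finset.mul_sum]
  rw [Finset.sum_eq_single M]
  · rw [mul_smul_comm, hidem]
  · intro L _ hL
    rw [mul_smul_comm, horth M L (Ne.symm hL), smul_zero]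
  · simp

lemma dot_ne_iff {A : Matrix (Fin n) (Fin n) ℂ} :
    (∃ u w : Fin n → ℂ, (u ᵥ* A) ⬝ᵥ w ≠ 0) ↔ A ≠ 0 := by
  constructor
  · rintro ⟨u, w, h⟩ rfl
    simp at h
  · intro hA
    have : ∃ i j, A i j ≠ 0 := by
      by_contra h
      push_neg at h
      exact hA (by ext i j; simpa using h i j)
    obtain ⟨i, j, hij⟩ := this
    refine ⟨Pi.single i 1, Pi.single j 1, ?_⟩
    simpa [Matrix.single_vecMul, dotProduct_single] using hij

lemma star_mulVec' (A : Matrix (Fin n) (Fin n) ℂ) (v : Fin n → ℂ) :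
    star (A *ᵥ v) = A.map (starRingEnd ℂ) *ᵥ star v := by
  funext i
  simp [Matrix.mulVec, dotProduct, map_sum, Matrix.map_apply, Pi.star_apply,
    Complex.star_def]

lemma pairNZ_iff (hσ : ∀ L, σ (σ L) = L)
    (hconj : ∀ L, P (σ L) = (P L).map (starRingEnd ℂ))
    {J : Matrix (Fin n) (Fin n) ℂ} (hJ : J.map (starRingEnd ℂ) = J) (L L' : Fin s) :
    pairNZ J P L L' ↔ (P L)ᵀ * J * P (σ L') ≠ 0 := by
  have key : ∀ u v : Fin n → ℂ,
      herm (P L *ᵥ u) (J *ᵥ (P L' *ᵥ v)) = (u ᵥ* ((P L)ᵀ * J * P (σ L'))) ⬝ᵥ star v := by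
    intro u v
    have h1 : herm (P L *ᵥ u) (J *ᵥ (P L' *ᵥ v))
        = (P L *ᵥ u) ⬝ᵥ star (J *ᵥ (P L' *ᵥ v)) := by
      simp [herm, dotProduct, Pi.star_apply, Complex.star_def]
    rw [h1, Matrix.mulVec_mulVec, star_mulVec', Matrix.map_mul, hJ, ← hconj,
      ← Matrix.vecMul_transpose, Matrix.dotProduct_mulVec, Matrix.vecMul_vecMul,
      ← Matrix.mul_assoc]
  rw [pairNZ]
  constructor
  · rintro ⟨u, v, h⟩
    rw [key] at h
    exact dot_ne_iff.mp ⟨u, star v, h⟩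
  · intro h
    obtain ⟨u, w, h2⟩ := dot_ne_iff.mpr h
    exact ⟨u, star w, by rw [key]; simpa using h2⟩

lemma Phi_map_star (hconj : ∀ L, P (σ L) = (P L).map (starRingEnd ℂ))
    (hstar : ∀ (a : Fin d → ℤ) θ, (starRingEnd ℂ) (eHalf a θ) = eHalf (-a) θ) (θ : Fin d → ℝ) :
    (PhiTriv P m θ).map (starRingEnd ℂ) = ∑ L, eHalf (-(m L)) θ • P (σ L) := by
  ext i j
  simp [PhiTriv, Matrix.map_apply, Matrix.sum_apply, Matrix.smul_apply, map_sum,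
    _root_.map_mul, hstar, hconj, smul_eq_mul]

lemma expand_sym (J : Matrix (Fin n) (Fin n) ℂ) (θ : Fin d → ℝ) :
    (PhiTriv P m θ)ᵀ * J * PhiTriv P m θ
      = ∑ L, ∑ M, (eHalf (m L) θ * eHalf (m M) θ) • ((P L)ᵀ * J * P M) := by
  rw [PhiTriv, Matrix.transpose_sum]
  simp only [Matrix.transpose_smul, Finset.sum_mul, Finset.mul_sum, smul_mul_assoc,
    mul_smul_comm, smul_smul, Finset.smul_sum]
  rw [Finset.sum_comm]
  exact Finset.sum_congr rfl fun L _ => Finset.sum_congr rfl fun M _ => by rw [mul_comm]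

theorem stmt_6 (d k s : ℕ) (P : Fin s → Matrix (Fin (k + k)) (Fin (k + k)) ℂ)
    (hsum : ∑ L, P L = 1)
    (hidem : ∀ L, P L * P L = P L)
    (horth : ∀ L L', L ≠ L' → P L * P L' = 0)
    (hne : ∀ L, P L ≠ 0)
    (σ : Fin s → Fin s) (hσ : ∀ L, σ (σ L) = L)
    (hconj : ∀ L, P (σ L) = (P L).map (starRingEnd ℂ))
    (hsymp : ∀ L, ∃! L', pairNZ (Jmat k) P L L')
    (m : Fin s → Fin d → ℤ) :
    (∀ θ : Fin d → ℝ,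
        (∀ i j, (PhiTriv P m θ i j).im = 0) ∧
        (PhiTriv P m θ)ᵀ * Jmat k * PhiTriv P m θ = Jmat k) ↔
      ((∀ L, m (σ L) = -(m L)) ∧
        ∀ L L', pairNZ (Jmat k) P L L' → m L = m L') := by
  have hpair : ∀ L L', pairNZ (Jmat k) P L L' ↔ (P L)ᵀ * Jmat k * P (σ L') ≠ 0 :=
    fun L L' => pairNZ_iff hσ hconj (Jmat_conj k) L L'
  constructor
  · intro h
    -- realness gives m (σ M) = -(m M)
    have hreal : ∀ M, m (σ M) = -(m M) := by
      intro M
      have he : ∀ θ : Fin d → ℝ, eHalf (m M + m (σ M)) θ = 1 := by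
        intro θ
        have h1 := (h θ).1
        have hstar : (PhiTriv P m θ).map (starRingEnd ℂ) = PhiTriv P m θ := by
          ext i j
          simp only [Matrix.map_apply]
          exact Complex.conj_eq_iff_im.mpr (h1 i j)
        rw [Phi_map_star hconj star_eHalf θ] at hstar
        -- extract: P M * LHS * nothing
        have eL : P M * (∑ L, eHalf (-(m L)) θ • P (σ L)) = eHalf (-(m (σ M))) θ • P M := by
          rw [Finset.mul_sum, Finset.sum_eq_single (σ M)]
          · rw [mul_smul_comm, hσ, hidem]
          · intro L _ hL
            have : M ≠ σ L := by
              intro hML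
              exact hL (by rw [hML, hσ])
            rw [mul_smul_comm, horth M (σ L) this, smul_zero]
          · simp
        have eR : P M * PhiTriv P m θ = eHalf (m M) θ • P M := P_mul_Phi hidem horth θ M
        rw [hstar, eR] at eL
        have hsc : eHalf (m M) θ = eHalf (-(m (σ M))) θ := by
          have := sub_eq_zero.mpr eL
          rw [← sub_smul] at this
          rcases smul_eq_zero.mp this with hc | hc
          · exact sub_eq_zero.mp hc
          · exact absurd hc (hne M)
        rw [eHalf_add', hsc, ← eHalf_add']
        simp [eHalf_zero']
      exact eq_neg_of_add_eq_zero_right (eHalf_forall_one he)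
    -- symplecticity gives: Q L M ≠ 0 → m M = -(m L)
    have hQ : ∀ L M, (P L)ᵀ * Jmat k * P M ≠ 0 → m M = -(m L) := by
      intro L M hQLM
      have he : ∀ θ : Fin d → ℝ, eHalf (m L + m M) θ = 1 := by
        intro θ
        have h2 := (h θ).2
        have e1 : (P L)ᵀ * ((PhiTriv P m θ)ᵀ * Jmat k * PhiTriv P m θ) * P M
            = (eHalf (m L) θ * eHalf (m M) θ) • ((P L)ᵀ * Jmat k * P M) := by
          have a1 : (P L)ᵀ * ((PhiTriv P m θ)ᵀ * Jmat k * PhiTriv P m θ) * P M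
              = (PhiTriv P m θ * P L)ᵀ * Jmat k * (PhiTriv P m θ * P M) := by
            rw [Matrix.transpose_mul]
            noncomm_ring
          rw [a1, Phi_mul_P hidem horth θ L, Phi_mul_P hidem horth θ M,
            Matrix.transpose_smul, smul_mul_assoc, smul_mul_assoc, mul_smul_comm, smul_smul]
        rw [h2] at e1
        -- e1 : Q = (e*e) • Q
        have : ∃ i j, ((P L)ᵀ * Jmat k * P M) i j ≠ 0 := by
          by_contra hcon
          push_neg at hcon
          exact hQLM (by ext i j; simpa using hcon i j)
        obtain ⟨i, j, hij⟩ := this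
        have := congr_arg (fun A => A i j) e1
        simp only [Matrix.smul_apply, smul_eq_mul] at this
        have hee : eHalf (m L) θ * eHalf (m M) θ = 1 :=
          mul_right_cancel₀ hij (by rw [one_mul]; exact this.symm)
        rw [eHalf_add', hee]
      have h0 := eHalf_forall_one he
      have : m L + m M = 0 := h0
      funext i
      have := congrFun this i
      simp only [Pi.add_apply, Pi.zero_apply] at this
      simp only [Pi.neg_apply]
      omega
    refine ⟨hreal, fun L L' hp => ?_⟩
    have := hQ L (σ L') ((hpair L L').mp hp)
    rw [hreal L'] at this
    have := neg_injective this
    exact this.symm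
  · rintro ⟨h1, h2⟩ θ
    constructor
    · intro i j
      have hmap : (PhiTriv P m θ).map (starRingEnd ℂ) = PhiTriv P m θ := by
        rw [Phi_map_star hconj star_eHalf θ, PhiTriv]
        rw [← Equiv.sum_comp (Function.Involutive.toPerm σ hσ)
          (fun L => eHalf (m L) θ • P L)]
        refine Finset.sum_congr rfl fun L _ => ?_
        show _ = eHalf (m (σ L)) θ • P (σ L)
        rw [h1 L]
      have := congr_arg (fun A => A i j) hmap
      simp only [Matrix.map_apply] at this
      exact Complex.conj_eq_iff_im.mp this
    · rw [expand_sym]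
      have step : ∀ L M : Fin s, (eHalf (m L) θ * eHalf (m M) θ) • ((P L)ᵀ * Jmat k * P M)
          = (P L)ᵀ * Jmat k * P M := by
        intro L M
        by_cases hQ : (P L)ᵀ * Jmat k * P M = 0
        · rw [hQ, smul_zero]
        · have hp : pairNZ (Jmat k) P L (σ M) := by
            rw [hpair]
            rwa [hσ]
          have := h2 L (σ M) hp
          rw [← eHalf_add', this, h1 M]
          simp [eHalf_zero']
      simp only [step]
      have : ∑ L, ∑ M, (P L)ᵀ * Jmat k * P M
          = (∑ L, P L)ᵀ * Jmat k * (∑ M, P M) := by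
        rw [Matrix.transpose_sum]
        simp only [Finset.sum_mul, Finset.mul_sum]
        exact Finset.sum_comm
      rw [this, hsum]
      simp
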